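/- The Santaló point satisfies s(Af) = A⁻¹(s(f)) for every nonsingular affine map A = T + a with T ∈ GL(n), where s(f) is the unique point z minimizing ∫ f^z(y) dy over z in the interior of supp(f). -/

import Mathlib

open MeasureTheory Filter
noncomputable section

/-- `ℝⁿ` as a Euclidean space. -/
abbrev Euc (n : ℕ) := EuclideanSpace ℝ (Fin n)

/-- `f` is a non-degenerate, upper semicontinuous, integrable log-concave
function on `ℝⁿ` (the class `LC`): `f ≥ 0`, `f` is upper semicontinuous,
log-concave, integrable with `0 < ∫ f`, and the interior of its support is
non-empty. -/
def IsLC {n : ℕ} (f : Euc n → ℝ) : Prop :=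
  (∀ x, 0 ≤ f x) ∧ UpperSemicontinuous f ∧
  (∀ x y : Euc n, ∀ a b : ℝ, 0 ≤ a → 0 ≤ b → a + b = 1 →
      f x ^ a * f y ^ b ≤ f (a • x + b • y)) ∧
  Integrable f ∧ 0 < ∫ x, f x ∧ (interior (Function.support f)).Nonempty

/-- The polar of `f` with respect to `z`:
`f^z(y) = inf_{x ∈ supp f} e^{−⟨x−z, y−z⟩}/f(x)`. -/
def polarAt {n : ℕ} (f : Euc n → ℝ) (z y : Euc n) : ℝ :=
  ⨅ x : Function.support f,
    Real.exp (-(inner ℝ ((x : Euc n) - z) (y - z) : ℝ)) / f x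

/-- `s` is a Santaló point of `f`: a point of the interior of the support of
`f` minimizing `z ↦ ∫ f^z`. -/
def IsSantaloPoint {n : ℕ} (f : Euc n → ℝ) (s : Euc n) : Prop :=
  s ∈ interior (Function.support f) ∧
  ∀ z ∈ interior (Function.support f), ∫ y, polarAt f s y ≤ ∫ y, polarAt f z y

/-- Change of variables for an invertible affine substitution. -/
lemma integral_comp_key {n : ℕ} (L : Euc n ≃ₗ[ℝ] Euc n) (a b : Euc n) (g : Euc n → ℝ) :
    ∫ y, g (a + L (y - b)) = |LinearMap.det (L : Euc n →ₗ[ℝ] Euc n)|⁻¹ * ∫ y, g y := by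
  have h1 : ∫ y, g (a + L (y - b)) = ∫ y, g (a + L y) :=
    integral_sub_right_eq_self (fun y => g (a + L y)) b
  set e : Euc n ≃ᵐ Euc n := L.toContinuousLinearEquiv.toHomeomorph.toMeasurableEquiv with he
  have hdet : LinearMap.det (L : Euc n →ₗ[ℝ] Euc n) ≠ 0 := L.isUnit_det'.ne_zero
  have hmap : Measure.map e (volume : Measure (Euc n))
      = ENNReal.ofReal |(LinearMap.det (L : Euc n →ₗ[ℝ] Euc n))⁻¹| • volume := by
    have : ⇑e = ⇑(L : Euc n →ₗ[ℝ] Euc n) := rfl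
    rw [this, Measure.map_linearMap_addHaar_eq_smul_addHaar _ hdet]
  have h2 : ∫ y, g (a + L y) = ∫ y, g (a + y) ∂(Measure.map e volume) :=
    (MeasureTheory.integral_map_equiv e (fun y => g (a + y))).symm
  rw [h1, h2, hmap, integral_smul_measure, ENNReal.toReal_ofReal (abs_nonneg _),
    abs_inv, smul_eq_mul, integral_add_left_eq_self (fun y => g y) a]

/-- The polar of `f ∘ A` at `A⁻¹ z` is the polar of `f` at `z` composed with
an affine substitution. -/
lemma polar_comp {n : ℕ} (f : Euc n → ℝ) (A : Euc n ≃ᵃ[ℝ] Euc n) (z y : Euc n) :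
    polarAt (fun x => f (A x)) (A.symm z) y
      = polarAt f z (z + LinearMap.adjoint (A.symm.linear : Euc n →ₗ[ℝ] Euc n)
          (y - A.symm z)) := by
  set S : Euc n →ₗ[ℝ] Euc n := (A.symm.linear : Euc n →ₗ[ℝ] Euc n) with hS
  set e : ↥(Function.support fun x => f (A x)) ≃ ↥(Function.support f) :=
    { toFun := fun x => ⟨A x, x.2⟩
      invFun := fun u => ⟨A.symm u, show f (A (A.symm (u : Euc n))) ≠ 0 by
        rw [A.apply_symm_apply]; exact u.2⟩
      left_inv := fun x => by ext; simp
      right_inv := fun u => by ext; simp } with he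
  unfold polarAt
  rw [← Equiv.iInf_comp e.symm]
  refine iInf_congr fun u => ?_
  have h1 : A ((e.symm u : Euc n)) = (u : Euc n) := by simp [he]
  have h2 : ((e.symm u : Euc n)) = A.symm (u : Euc n) := by simp [he]
  have h3 : A.symm (u : Euc n) - A.symm z = S ((u : Euc n) - z) := by
    simpa [vsub_eq_sub, hS] using (AffineMap.linearMap_vsub A.symm.toAffineMap (u : Euc n) z).symm
  have h4 : (inner ℝ ((e.symm u : Euc n) - A.symm z) (y - A.symm z) : ℝ)
      = (inner ℝ ((u : Euc n) - z) ((z + LinearMap.adjoint S (y - A.symm z)) - z) : ℝ) := by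
    rw [h2, h3, add_sub_cancel_left]
    exact (LinearMap.adjoint_inner_right S _ _).symm
  show Real.exp _ / f (A _) = _
  rw [h1, h4]

/-- The adjoint of the linear part of `A.symm`, as a linear equivalence. -/
def adjEquiv {n : ℕ} (A : Euc n ≃ᵃ[ℝ] Euc n) : Euc n ≃ₗ[ℝ] Euc n :=
  LinearEquiv.ofLinear
    (LinearMap.adjoint (A.symm.linear : Euc n →ₗ[ℝ] Euc n))
    (LinearMap.adjoint (A.linear : Euc n →ₗ[ℝ] Euc n))
    (by
      rw [← LinearMap.adjoint_comp]
      have : (A.linear : Euc n →ₗ[ℝ] Euc n).comp (A.symm.linear : Euc n →ₗ[ℝ] Euc n)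
          = LinearMap.id := by
        ext v
        simp [AffineEquiv.linear_symm]
      rw [this]
      exact ((LinearMap.eq_adjoint_iff LinearMap.id LinearMap.id).mpr (fun x y => rfl)).symm)
    (by
      rw [← LinearMap.adjoint_comp]
      have : (A.symm.linear : Euc n →ₗ[ℝ] Euc n).comp (A.linear : Euc n →ₗ[ℝ] Euc n)
          = LinearMap.id := by
        ext v
        simp [AffineEquiv.linear_symm]
      rw [this]
      exact ((LinearMap.eq_adjoint_iff LinearMap.id LinearMap.id).mpr (fun x y => rfl)).symm)

/-- The integral of the polar of `f ∘ A` at `A⁻¹ z` is a positive multiple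
(independent of `z`) of the integral of the polar of `f` at `z`. -/
lemma integral_polar_comp {n : ℕ} (f : Euc n → ℝ) (A : Euc n ≃ᵃ[ℝ] Euc n) (z : Euc n) :
    ∫ y, polarAt (fun x => f (A x)) (A.symm z) y
      = |LinearMap.det ((adjEquiv A : Euc n ≃ₗ[ℝ] Euc n) : Euc n →ₗ[ℝ] Euc n)|⁻¹
        * ∫ y, polarAt f z y := by
  have h : ∀ y, polarAt (fun x => f (A x)) (A.symm z) y
      = polarAt f z (z + (adjEquiv A) (y - A.symm z)) := fun y => polar_comp f A z y
  simp_rw [h]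
  exact integral_comp_key (adjEquiv A) z (A.symm z) (polarAt f z)

/-- The interior of the support of `f ∘ A` is the preimage under `A` of the
interior of the support of `f`. -/
lemma interior_support_comp {n : ℕ} (f : Euc n → ℝ) (A : Euc n ≃ᵃ[ℝ] Euc n) :
    interior (Function.support fun x => f (A x))
      = ⇑A ⁻¹' interior (Function.support f) := by
  have hsupp : Function.support (fun x => f (A x)) = ⇑A ⁻¹' Function.support f :=
    Function.support_comp_eq_preimage f ⇑A
  rw [hsupp]
  have hA : ⇑A = ⇑(A.toHomeomorphOfFiniteDimensional) := rfl
  rw [hA, (A.toHomeomorphOfFiniteDimensional).preimage_interior]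

/-- the Santaló point satisfies `s(Af) = A⁻¹(s(f))` for every
nonsingular affine map `A`, where `(Af)(x) = f(Ax)`. -/
theorem santalo_affine_contravariant (n : ℕ) (f : Euc n → ℝ) (hf : IsLC f)
    (A : Euc n ≃ᵃ[ℝ] Euc n) (s : Euc n) (hs : IsSantaloPoint f s)
    (huniq : ∀ s', IsSantaloPoint f s' → s' = s) :
    IsSantaloPoint (fun x => f (A x)) (A.symm s) := by
  obtain ⟨hs_mem, hs_min⟩ := hs
  constructor
  · rw [interior_support_comp f A]
    simpa using hs_mem
  · intro z hz
    rw [interior_support_comp f A] at hz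
    have hz' : A z ∈ interior (Function.support f) := hz
    have h1 := integral_polar_comp f A s
    have h2 := integral_polar_comp f A (A z)
    rw [A.symm_apply_apply] at h2
    rw [h1, h2]
    exact mul_le_mul_of_nonneg_left (hs_min (A z) hz')
      (inv_nonneg.mpr (abs_nonneg _))
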